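/- With G as in the generalized Hilbert construction with α ≥ 1/2, the image G([0,1]) equals the square [−β/(1−α), 1+β/(1−α)]^2, where β = (2α−1)/4; in particular G is space filling. -/

import Mathlib

open Set

/-- Given the values `v0 = h(0)` and `v1 = h(1)`, the unique traversal-order function
(as in Definition 2.1) with these values: `h(2) = -h(0)`, `h(3) = -h(1)`. -/
def hilbertOrder (v0 v1 : ℝ × ℝ) : Fin 4 → ℝ × ℝ := ![v0, v1, -v0, -v1]

/-- The traversal functions `f_{a_1 … a_n}` of the standard Hilbert algorithm, recursing
on the string read backwards (head = last digit `a_n`). -/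
def travRev : List (Fin 4) → Fin 4 → ℝ × ℝ
  | [] => hilbertOrder (-1, -1) (-1, 1)
  | a :: w =>
    let f := travRev w
    if a = 0 then hilbertOrder (f 0) (f 3)
    else if a = 3 then hilbertOrder (f 2) (f 1)
    else f

/-- The traversal function `f_{a_1 … a_n}` associated to the string `a_1 … a_n`. -/
def trav (w : List (Fin 4)) : Fin 4 → ℝ × ℝ := travRev w.reverse

/-- The limit value `G(t)` of the generalized Hilbert curve at the point of the Cantor
set with digit sequence `a`. -/
noncomputable def GHlim (α : ℝ) (a : ℕ → Fin 4) : ℝ × ℝ :=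
  (1 / 2, 1 / 2) + ∑' k : ℕ, (α ^ k / 4) • trav (List.ofFn fun i : Fin k => a i) (a k)

/-- The point of the Cantor set `C_ρ` with digit sequence `a`. -/
noncomputable def cantorPt (ρ : ℝ) (a : ℕ → Fin 4) : ℝ :=
  ((1 - ρ) / (3 * ρ)) * ∑' n : ℕ, (a n : ℝ) * ρ ^ (n + 1)

/-! ### Auxiliary: traversal functions take all four sign values -/

def IsSign (v : ℝ × ℝ) : Prop := (v.1 = 1 ∨ v.1 = -1) ∧ (v.2 = 1 ∨ v.2 = -1)

lemma isSign_neg {v : ℝ × ℝ} (h : IsSign v) : IsSign (-v) := by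
  obtain ⟨h1, h2⟩ := h
  constructor
  · rcases h1 with h|h <;> simp [h]
  · rcases h2 with h|h <;> simp [h]

lemma travRev_good (w : List (Fin 4)) : ∃ v0 v1 : ℝ × ℝ, IsSign v0 ∧ IsSign v1 ∧
    v1 ≠ v0 ∧ v1 ≠ -v0 ∧ travRev w = hilbertOrder v0 v1 := by
  induction w with
  | nil =>
    refine ⟨(-1,-1), (-1,1), ⟨by norm_num, by norm_num⟩, ⟨by norm_num, by norm_num⟩, ?_, ?_, rfl⟩
    · simp [Prod.ext_iff]; norm_num
    · simp [Prod.ext_iff]; norm_num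
  | cons a w ih =>
    obtain ⟨v0, v1, h0, h1, hne, hne', hf⟩ := ih
    by_cases ha : a = 0
    · refine ⟨v0, -v1, h0, isSign_neg h1, ?_, ?_, ?_⟩
      · intro h; apply hne'; rw [← h, neg_neg]
      · intro h; apply hne; rw [← neg_neg v1, h, neg_neg]
      · show (if a = 0 then _ else _) = _
        rw [if_pos ha, hf]; rfl
    · by_cases ha3 : a = 3
      · refine ⟨-v0, v1, isSign_neg h0, h1, hne', ?_, ?_⟩
        · rw [neg_neg]; exact hne
        · show (if a = 0 then _ else _) = _
          rw [if_neg ha, if_pos ha3, hf]; rfl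
      · refine ⟨v0, v1, h0, h1, hne, hne', ?_⟩
        show (if a = 0 then _ else _) = _
        rw [if_neg ha, if_neg ha3, hf]

lemma trav_surj (w : List (Fin 4)) (v : ℝ × ℝ) (hv : IsSign v) : ∃ d, trav w d = v := by
  obtain ⟨v0, v1, h0, h1, hne, hne', hf⟩ := travRev_good w.reverse
  have key : v = v0 ∨ v = v1 ∨ v = -v0 ∨ v = -v1 := by
    obtain ⟨x0, y0⟩ := v0
    obtain ⟨x1, y1⟩ := v1
    obtain ⟨x, y⟩ := v
    obtain ⟨hx0, hy0⟩ := h0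
    obtain ⟨hx1, hy1⟩ := h1
    obtain ⟨hx, hy⟩ := hv
    simp only at hx0 hy0 hx1 hy1 hx hy
    simp only [Prod.mk.injEq, Prod.neg_mk, ne_eq] at hne hne' ⊢
    rcases hx0 with rfl|rfl <;> rcases hy0 with rfl|rfl <;> rcases hx1 with rfl|rfl <;>
      rcases hy1 with rfl|rfl <;> rcases hx with rfl|rfl <;> rcases hy with rfl|rfl <;>
      (try norm_num at hne) <;> (try norm_num at hne') <;> norm_num
  unfold trav
  rw [hf]
  rcases key with h|h|h|h
  · exact ⟨0, h.symm⟩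
  · exact ⟨1, h.symm⟩
  · exact ⟨2, h.symm⟩
  · exact ⟨3, h.symm⟩

lemma trav_isSign (w : List (Fin 4)) (d : Fin 4) : IsSign (trav w d) := by
  obtain ⟨v0, v1, h0, h1, _, _, hf⟩ := travRev_good w.reverse
  show IsSign (travRev w.reverse d)
  rw [hf]
  fin_cases d
  · exact h0
  · exact h1
  · exact isSign_neg h0
  · exact isSign_neg h1

lemma isSign_norm {v : ℝ × ℝ} (h : IsSign v) : ‖v‖ = 1 := by
  rw [Prod.norm_def, Real.norm_eq_abs, Real.norm_eq_abs]
  rcases h.1 with h1|h1 <;> rcases h.2 with h2|h2 <;> rw [h1, h2] <;> norm_num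

/-! ### The greedy digit construction -/

noncomputable def sgn (v : ℝ × ℝ) : ℝ × ℝ :=
  (if 0 ≤ v.1 then 1 else -1, if 0 ≤ v.2 then 1 else -1)

lemma sgn_isSign (v : ℝ × ℝ) : IsSign (sgn v) := by
  unfold sgn IsSign
  constructor <;> dsimp only <;> split <;> simp

noncomputable def nextDig (p : ℝ × ℝ) (w : List (Fin 4)) (c : ℝ × ℝ) : Fin 4 :=
  (trav_surj w (sgn (p - c)) (sgn_isSign _)).choose

lemma nextDig_spec (p : ℝ × ℝ) (w : List (Fin 4)) (c : ℝ × ℝ) :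
    trav w (nextDig p w c) = sgn (p - c) :=
  (trav_surj w (sgn (p - c)) (sgn_isSign _)).choose_spec

noncomputable def state (α : ℝ) (p : ℝ × ℝ) : ℕ → List (Fin 4) × (ℝ × ℝ)
  | 0 => ([], (1/2, 1/2))
  | n+1 =>
    let s := state α p n
    let d := nextDig p s.1 s.2
    (s.1 ++ [d], s.2 + (α ^ s.1.length / 4) • trav s.1 d)

noncomputable def dig (α : ℝ) (p : ℝ × ℝ) (n : ℕ) : Fin 4 :=
  nextDig p (state α p n).1 (state α p n).2

lemma state_fst (α : ℝ) (p : ℝ × ℝ) (n : ℕ) :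
    (state α p n).1 = List.ofFn (fun i : Fin n => dig α p i) := by
  induction n with
  | zero => rfl
  | succ n ih =>
    show (state α p n).1 ++ [dig α p n] = _
    rw [List.ofFn_succ', List.concat_eq_append, ih]
    rfl

lemma state_len (α : ℝ) (p : ℝ × ℝ) (n : ℕ) : (state α p n).1.length = n := by
  rw [state_fst]; simp

lemma state_snd (α : ℝ) (p : ℝ × ℝ) (n : ℕ) :
    (state α p n).2 = (1/2, 1/2) + ∑ k ∈ Finset.range n,
      (α ^ k / 4) • trav (List.ofFn fun i : Fin k => dig α p i) (dig α p k) := by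
  induction n with
  | zero => rw [Finset.sum_range_zero, add_zero]; rfl
  | succ n ih =>
    show (state α p n).2 + (α ^ (state α p n).1.length / 4) • trav (state α p n).1 (dig α p n) = _
    rw [Finset.sum_range_succ, state_len, state_fst, ih, add_assoc]

lemma coord_ineq (lam α A x : ℝ) (hA : 0 ≤ A) (hlamα : lam * α = lam - 1/4)
    (h14 : 1/4 ≤ lam * α) (hx : |x| ≤ lam * A) :
    |x - A/4 * (if 0 ≤ x then 1 else -1)| ≤ lam * α * A := by
  rw [abs_le] at hx ⊢
  have h1 : A/4 ≤ lam * α * A := by nlinarith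
  have h2 : lam * α * A = lam * A - A/4 := by nlinarith
  split <;> constructor <;> nlinarith

lemma state_invariant (α : ℝ) (p : ℝ × ℝ) (lam : ℝ) (hlamα : lam * α = lam - 1/4)
    (h14 : 1/4 ≤ lam * α) (hα0 : 0 ≤ α)
    (hp1 : |p.1 - 1/2| ≤ lam) (hp2 : |p.2 - 1/2| ≤ lam) (n : ℕ) :
    |p.1 - ((state α p n).2).1| ≤ lam * α ^ n ∧
    |p.2 - ((state α p n).2).2| ≤ lam * α ^ n := by
  induction n with
  | zero => rw [pow_zero, mul_one]; exact ⟨hp1, hp2⟩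
  | succ n ih =>
    have hc : (state α p (n+1)).2
        = (state α p n).2 + (α ^ n / 4) • sgn (p - (state α p n).2) := by
      have ht : trav (state α p n).1 (dig α p n) = sgn (p - (state α p n).2) :=
        nextDig_spec p (state α p n).1 (state α p n).2
      show (state α p n).2 + (α ^ (state α p n).1.length / 4) • trav (state α p n).1 (dig α p n) = _
      rw [state_len, ht]
    have hA : (0:ℝ) ≤ α ^ n := pow_nonneg hα0 n
    rw [hc]
    have e1 : p.1 - ((state α p n).2 + (α ^ n / 4) • sgn (p - (state α p n).2)).1
        = (p.1 - ((state α p n).2).1) - α^n/4 * (if 0 ≤ p.1 - ((state α p n).2).1 then 1 else -1) := by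
      show p.1 - (((state α p n).2).1 + (α ^ n / 4) * (sgn (p - (state α p n).2)).1) = _
      unfold sgn
      show p.1 - (((state α p n).2).1 + (α ^ n / 4) * (if 0 ≤ p.1 - ((state α p n).2).1 then 1 else -1)) = _
      ring
    have e2 : p.2 - ((state α p n).2 + (α ^ n / 4) • sgn (p - (state α p n).2)).2
        = (p.2 - ((state α p n).2).2) - α^n/4 * (if 0 ≤ p.2 - ((state α p n).2).2 then 1 else -1) := by
      show p.2 - (((state α p n).2).2 + (α ^ n / 4) * (sgn (p - (state α p n).2)).2) = _
      unfold sgn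
      show p.2 - (((state α p n).2).2 + (α ^ n / 4) * (if 0 ≤ p.2 - ((state α p n).2).2 then 1 else -1)) = _
      ring
    rw [e1, e2]
    have key1 := coord_ineq lam α (α ^ n) _ hA hlamα h14 ih.1
    have key2 := coord_ineq lam α (α ^ n) _ hA hlamα h14 ih.2
    rw [pow_succ]
    constructor
    · calc |(p.1 - ((state α p n).2).1) - α^n/4 * _| ≤ lam * α * α ^ n := key1
        _ = lam * (α ^ n * α) := by ring
    · calc |(p.2 - ((state α p n).2).2) - α^n/4 * _| ≤ lam * α * α ^ n := key2
        _ = lam * (α ^ n * α) := by ring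

lemma GHlim_summable (α : ℝ) (a : ℕ → Fin 4) (hα0 : 0 ≤ α) (hα2 : α < 1) :
    Summable fun k : ℕ => (α ^ k / 4) • trav (List.ofFn fun i : Fin k => a i) (a k) := by
  apply Summable.of_norm_bounded
    ((summable_geometric_of_lt_one hα0 hα2).div_const 4)
  intro k
  rw [norm_smul, isSign_norm (trav_isSign _ _), mul_one, Real.norm_eq_abs,
    abs_of_nonneg (by positivity)]

lemma GHlim_eq (α : ℝ) (p : ℝ × ℝ) (lam : ℝ) (hlamα : lam * α = lam - 1/4)
    (h14 : 1/4 ≤ lam * α) (hα0 : 0 ≤ α) (hα2 : α < 1)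
    (hp1 : |p.1 - 1/2| ≤ lam) (hp2 : |p.2 - 1/2| ≤ lam) :
    GHlim α (dig α p) = p := by
  have hsum := GHlim_summable α (dig α p) hα0 hα2
  have h1 : Filter.Tendsto (fun n => (state α p n).2) Filter.atTop (nhds (GHlim α (dig α p))) := by
    have := hsum.hasSum.tendsto_sum_nat
    have := this.const_add ((1:ℝ)/2, (1:ℝ)/2)
    refine this.congr fun n => ?_
    rw [state_snd]
  have h2 : Filter.Tendsto (fun n => (state α p n).2) Filter.atTop (nhds p) := by
    rw [tendsto_iff_dist_tendsto_zero]
    have hb : ∀ n, dist ((state α p n).2) p ≤ lam * α ^ n := by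
      intro n
      obtain ⟨i1, i2⟩ := state_invariant α p lam hlamα h14 hα0 hp1 hp2 n
      rw [Prod.dist_eq, Real.dist_eq, Real.dist_eq, max_le_iff]
      constructor
      · rw [abs_sub_comm]; exact i1
      · rw [abs_sub_comm]; exact i2
    have hz : Filter.Tendsto (fun n : ℕ => lam * α ^ n) Filter.atTop (nhds 0) := by
      rw [show (0:ℝ) = lam * 0 by ring]
      exact (tendsto_pow_atTop_nhds_zero_of_lt_one hα0 hα2).const_mul lam
    exact squeeze_zero (fun n => dist_nonneg) hb hz
  exact tendsto_nhds_unique h1 h2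

lemma GHlim_coord_bound (α : ℝ) (a : ℕ → Fin 4) (hα0 : 0 ≤ α) (hα2 : α < 1) :
    |(GHlim α a).1 - 1/2| ≤ 1/(4*(1-α)) ∧ |(GHlim α a).2 - 1/2| ≤ 1/(4*(1-α)) := by
  have hsum := GHlim_summable α a hα0 hα2
  have hnorm : ‖∑' k : ℕ, (α ^ k / 4) • trav (List.ofFn fun i : Fin k => a i) (a k)‖
      ≤ 1/(4*(1-α)) := by
    calc ‖∑' k : ℕ, (α ^ k / 4) • trav (List.ofFn fun i : Fin k => a i) (a k)‖
        ≤ ∑' k : ℕ, ‖(α ^ k / 4) • trav (List.ofFn fun i : Fin k => a i) (a k)‖ :=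
          norm_tsum_le_tsum_norm hsum.norm
      _ = ∑' k : ℕ, α ^ k / 4 := tsum_congr fun k => by
          rw [norm_smul, isSign_norm (trav_isSign _ _), mul_one, Real.norm_eq_abs,
            abs_of_nonneg (by positivity)]
      _ = (∑' k : ℕ, α ^ k) / 4 := by rw [tsum_div_const]
      _ = (1 - α)⁻¹ / 4 := by rw [tsum_geometric_of_lt_one hα0 hα2]
      _ = 1/(4*(1-α)) := by
          have h : (1:ℝ) - α ≠ 0 := by linarith
          field_simp
  constructor
  · have h : (GHlim α a).1 = 1/2
        + (∑' k : ℕ, (α ^ k / 4) • trav (List.ofFn fun i : Fin k => a i) (a k)).1 := by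
      unfold GHlim; rw [Prod.fst_add]
    rw [h, add_sub_cancel_left, ← Real.norm_eq_abs]
    exact le_trans (norm_fst_le _) hnorm
  · have h : (GHlim α a).2 = 1/2
        + (∑' k : ℕ, (α ^ k / 4) • trav (List.ofFn fun i : Fin k => a i) (a k)).2 := by
      unfold GHlim; rw [Prod.snd_add]
    rw [h, add_sub_cancel_left, ← Real.norm_eq_abs]
    exact le_trans (norm_snd_le _) hnorm

/-! ### Cantor set lemmas -/

section cantor
variable {ρ : ℝ} (hρ0 : 0 < ρ) (hρ1 : ρ < 1/4)
include hρ0 hρ1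

omit hρ0 in
lemma hρ1' : ρ < 1 := lt_trans hρ1 (by norm_num)

omit hρ1 in
lemma cantor_term_bound (a : ℕ → Fin 4) (n : ℕ) :
    ‖(a n : ℝ) * ρ ^ (n + 1)‖ ≤ 3 * ρ ^ (n + 1) := by
  rw [Real.norm_eq_abs, abs_of_nonneg (by positivity)]
  have h3 : ((a n : ℕ) : ℝ) ≤ 3 := by
    have := Fin.is_le (a n); exact_mod_cast this
  have := pow_nonneg hρ0.le (n + 1)
  exact mul_le_mul_of_nonneg_right h3 this

lemma cantor_bound_summable : Summable fun n : ℕ => 3 * ρ ^ (n + 1) := by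
  have := (summable_geometric_of_lt_one hρ0.le (hρ1' hρ1)).mul_right ρ
  have := this.mul_left 3
  refine this.congr fun n => ?_
  rw [pow_succ]

lemma cantor_summable (a : ℕ → Fin 4) : Summable fun n : ℕ => (a n : ℝ) * ρ ^ (n + 1) :=
  Summable.of_norm_bounded (cantor_bound_summable hρ0 hρ1) (cantor_term_bound hρ0 a)

lemma cantor_bound_tsum : ∑' n : ℕ, 3 * ρ ^ (n + 1) = 3 * ρ / (1 - ρ) := by
  have h1 : ∑' n : ℕ, ρ ^ n = (1 - ρ)⁻¹ := tsum_geometric_of_lt_one hρ0.le (hρ1' hρ1)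
  have h2 : ∑' n : ℕ, 3 * ρ ^ (n + 1) = (3 * ρ) * ∑' n : ℕ, ρ ^ n :=
    (tsum_congr fun n => by rw [pow_succ]; ring).trans tsum_mul_left
  rw [h2, h1]
  have : (1:ℝ) - ρ ≠ 0 := by
    have := hρ1' hρ1; intro h; nlinarith
  field_simp

lemma cantor_mem01 (a : ℕ → Fin 4) : cantorPt ρ a ∈ Icc (0:ℝ) 1 := by
  have hco : (0:ℝ) < (1 - ρ) / (3 * ρ) := by
    have := hρ1' hρ1
    apply div_pos <;> nlinarith
  have hts0 : 0 ≤ ∑' n : ℕ, (a n : ℝ) * ρ ^ (n + 1) :=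
    tsum_nonneg fun n => by positivity
  have hts : ∑' n : ℕ, (a n : ℝ) * ρ ^ (n + 1) ≤ 3 * ρ / (1 - ρ) := by
    rw [← cantor_bound_tsum hρ0 hρ1]
    refine Summable.tsum_le_tsum (fun n => ?_) (cantor_summable hρ0 hρ1 a) (cantor_bound_summable hρ0 hρ1)
    have := cantor_term_bound hρ0 a n
    rw [Real.norm_eq_abs, abs_of_nonneg (by positivity)] at this
    exact this
  constructor
  · exact mul_nonneg hco.le hts0
  · calc ((1 - ρ) / (3 * ρ)) * ∑' n : ℕ, (a n : ℝ) * ρ ^ (n + 1)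
        ≤ ((1 - ρ) / (3 * ρ)) * (3 * ρ / (1 - ρ)) :=
          mul_le_mul_of_nonneg_left hts hco.le
      _ = 1 := by
          have h1 : (1:ℝ) - ρ ≠ 0 := by have := hρ1' hρ1; intro h; nlinarith
          field_simp

omit hρ0 hρ1 in
lemma cantor_zero : cantorPt ρ (fun _ => 0) = 0 := by
  unfold cantorPt
  have : ∀ n : ℕ, (((0 : Fin 4) : ℝ)) * ρ ^ (n + 1) = 0 := by intro n; norm_num
  rw [tsum_congr this, tsum_zero, mul_zero]

lemma cantor_one : cantorPt ρ (fun _ => 3) = 1 := by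
  unfold cantorPt
  have h3 : ((3 : Fin 4) : ℝ) = 3 := by
    have hn : ((3 : Fin 4) : ℕ) = 3 := rfl
    rw [show ((3 : Fin 4) : ℝ) = ((((3 : Fin 4) : ℕ)) : ℝ) from rfl, hn]; norm_num
  have : ∀ n : ℕ, (((3 : Fin 4) : ℝ)) * ρ ^ (n + 1) = 3 * ρ ^ (n + 1) := by
    intro n; rw [h3]
  rw [tsum_congr this, cantor_bound_tsum hρ0 hρ1]
  have h1 : (1:ℝ) - ρ ≠ 0 := by have := hρ1' hρ1; intro h; nlinarith
  field_simp

lemma cantor_continuous : Continuous (cantorPt ρ) := by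
  unfold cantorPt
  refine continuous_const.mul ?_
  refine continuous_tsum (fun n => ?_) (cantor_bound_summable hρ0 hρ1)
    (fun n a => cantor_term_bound hρ0 a n)
  exact ((continuous_of_discreteTopology (f := fun v : Fin 4 => (v : ℝ))).comp
    (continuous_apply n)).mul continuous_const

lemma cantor_compact : IsCompact (range (cantorPt ρ)) :=
  isCompact_range (cantor_continuous hρ0 hρ1)

end cantor

/-- For `α ≥ 1/2` the generalized Hilbert curve is space filling: with `β = (2α-1)/4`,
its image is exactly the square `[-β/(1-α), 1+β/(1-α)]²`. -/
theorem stmt13 (α ρ : ℝ) (hα1 : 1 / 2 ≤ α) (hα2 : α < 1) (hρ0 : 0 < ρ)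
    (hρ1 : ρ < 1 / 4) (β : ℝ) (hβ : β = (2 * α - 1) / 4)
    (G : ℝ → ℝ × ℝ) (hGcont : ContinuousOn G (Icc 0 1))
    (hGval : ∀ a : ℕ → Fin 4, G (cantorPt ρ a) = GHlim α a)
    (hGlin : ∀ s t : ℝ, 0 ≤ s → s < t → t ≤ 1 →
      Ioo s t ∩ Set.range (cantorPt ρ) = ∅ →
      ∀ u ∈ Icc s t, G u = G s + ((u - s) / (t - s)) • (G t - G s)) :
    G '' Icc (0:ℝ) 1
      = Icc (-(β / (1 - α))) (1 + β / (1 - α)) ×ˢ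
        Icc (-(β / (1 - α))) (1 + β / (1 - α)) := by
  have h1α : (0:ℝ) < 1 - α := by linarith
  have hα0 : (0:ℝ) ≤ α := by linarith
  set lam : ℝ := 1/(4*(1-α)) with hlamdef
  have hlam0 : 0 < lam := by rw [hlamdef]; positivity
  have hlam1 : lam * (1 - α) = 1/4 := by
    rw [hlamdef]; field_simp
  have hlamα : lam * α = lam - 1/4 := by
    have : lam * α = lam - lam * (1 - α) := by ring
    rw [this, hlam1]
  have h14 : 1/4 ≤ lam * α := by nlinarith
  have hend1 : -(β / (1 - α)) = 1/2 - lam := by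
    rw [hβ, hlamdef]; field_simp; ring
  have hend2 : 1 + β / (1 - α) = 1/2 + lam := by
    rw [hβ, hlamdef]; field_simp; ring
  rw [hend1, hend2]
  have hsq : ∀ q : ℝ × ℝ,
      q ∈ Icc (1/2 - lam) (1/2 + lam) ×ˢ Icc (1/2 - lam) (1/2 + lam)
      ↔ (|q.1 - 1/2| ≤ lam ∧ |q.2 - 1/2| ≤ lam) := by
    intro q
    simp only [Set.mem_prod, Set.mem_Icc, abs_le]
    constructor
    · rintro ⟨⟨a, b⟩, c, d⟩
      exact ⟨⟨by linarith, by linarith⟩, by linarith, by linarith⟩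
    · rintro ⟨⟨a, b⟩, c, d⟩
      exact ⟨⟨by linarith, by linarith⟩, by linarith, by linarith⟩
  have hGC : ∀ x ∈ range (cantorPt ρ),
      G x ∈ Icc (1/2 - lam) (1/2 + lam) ×ˢ Icc (1/2 - lam) (1/2 + lam) := by
    rintro _ ⟨a, rfl⟩
    rw [hGval]
    exact (hsq _).2 (GHlim_coord_bound α a hα0 hα2)
  have hC01 : range (cantorPt ρ) ⊆ Icc (0:ℝ) 1 := by
    rintro _ ⟨a, rfl⟩; exact cantor_mem01 hρ0 hρ1 a
  apply Subset.antisymm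
  · rintro _ ⟨u, hu, rfl⟩
    by_cases huC : u ∈ range (cantorPt ρ)
    · exact hGC u huC
    · -- gap argument
      have hCc := cantor_compact hρ0 hρ1
      have hS1cpt : IsCompact (range (cantorPt ρ) ∩ Icc 0 u) := hCc.inter_right isClosed_Icc
      have hS2cpt : IsCompact (range (cantorPt ρ) ∩ Icc u 1) := hCc.inter_right isClosed_Icc
      have hS1ne : (range (cantorPt ρ) ∩ Icc 0 u).Nonempty :=
        ⟨0, ⟨⟨fun _ => 0, cantor_zero⟩, le_refl 0, hu.1⟩⟩
      have hS2ne : (range (cantorPt ρ) ∩ Icc u 1).Nonempty :=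
        ⟨1, ⟨⟨fun _ => 3, cantor_one hρ0 hρ1⟩, hu.2, le_refl 1⟩⟩
      obtain ⟨s, hs_def⟩ : ∃ s, s = sSup (range (cantorPt ρ) ∩ Icc 0 u) := ⟨_, rfl⟩
      obtain ⟨t, ht_def⟩ : ∃ t, t = sInf (range (cantorPt ρ) ∩ Icc u 1) := ⟨_, rfl⟩
      have hsmem := hS1cpt.sSup_mem hS1ne
      rw [← hs_def] at hsmem
      obtain ⟨hsC, hs0, hsu⟩ := hsmem
      have htmem := hS2cpt.sInf_mem hS2ne
      rw [← ht_def] at htmem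
      obtain ⟨htC, htu, ht1⟩ := htmem
      have hsu' : s < u := lt_of_le_of_ne hsu (by rintro rfl; exact huC hsC)
      have htu' : u < t := lt_of_le_of_ne htu (by rintro rfl; exact huC htC)
      have hgap : Ioo s t ∩ range (cantorPt ρ) = ∅ := by
        ext x
        simp only [mem_inter_iff, mem_Ioo, mem_empty_iff_false, iff_false, not_and]
        rintro ⟨h1, h2⟩ hx
        rcases le_or_gt x u with h|h
        · have hxS1 : x ∈ range (cantorPt ρ) ∩ Icc 0 u := ⟨hx, le_trans hs0 h1.le, h⟩
          have := le_csSup hS1cpt.bddAbove hxS1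
          rw [← hs_def] at this
          linarith
        · have hxS2 : x ∈ range (cantorPt ρ) ∩ Icc u 1 := ⟨hx, h.le, by linarith⟩
          have := csInf_le hS2cpt.bddBelow hxS2
          rw [← ht_def] at this
          linarith
      have hGu := hGlin s t hs0 (lt_trans hsu' htu') ht1 hgap u ⟨hsu, htu⟩
      set θ := (u - s) / (t - s) with hθdef
      have hθ0 : 0 ≤ θ := by
        apply div_nonneg <;> linarith
      have hθ1 : θ ≤ 1 := by
        rw [hθdef, div_le_one (by linarith)]; linarith
      have hcomb : G s + θ • (G t - G s) = (1 - θ) • G s + θ • G t := by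
        rw [smul_sub, sub_smul, one_smul]; abel
      have hconv : Convex ℝ (Icc (1/2 - lam) (1/2 + lam) ×ˢ Icc (1/2 - lam) (1/2 + lam)) :=
        (convex_Icc _ _).prod (convex_Icc _ _)
      rw [hGu, hcomb]
      exact hconv (hGC s hsC) (hGC t htC) (by linarith) hθ0 (by ring)
  · intro q hq
    obtain ⟨hq1, hq2⟩ := (hsq q).1 hq
    refine ⟨cantorPt ρ (dig α q), cantor_mem01 hρ0 hρ1 _, ?_⟩
    rw [hGval]
    exact GHlim_eq α q lam hlamα h14 hα0 hα2 hq1 hq2
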